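/- Let z ∈ (0,1) and define I(z) := ∫_{log 2}^{1/z} ( (x z² e^{-x})/((z+1)(xz+z+1)) + z/((x-1)z-1) + z/(z+1) ) e^{-x} dx. Then I(z) = -((7+6 log 2)/16) z² + O(z³) as z → 0⁺. -/

import Mathlib

open Real Filter Asymptotics MeasureTheory intervalIntegral

lemma exp_small {z : ℝ} (hz : 0 < z) : Real.exp (-(1/z)) ≤ 4 * z ^ 2 := by
  have h1 : (1 : ℝ) + 1/(2*z) ≤ Real.exp (1/(2*z)) := by
    have := Real.add_one_le_exp (1/(2*z)); linarith
  have h2 : Real.exp (1/z) = Real.exp (1/(2*z)) * Real.exp (1/(2*z)) := by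
    rw [← Real.exp_add]; congr 1; field_simp; ring
  have h3 : 1/(4*z^2) ≤ Real.exp (1/z) := by
    rw [h2]
    have hq : 1/(2*z) ≤ Real.exp (1/(2*z)) := by linarith
    have hp : (0:ℝ) < 1/(2*z) := by positivity
    calc 1/(4*z^2) = (1/(2*z)) * (1/(2*z)) := by ring
    _ ≤ Real.exp (1/(2*z)) * Real.exp (1/(2*z)) :=
        mul_le_mul hq hq hp.le (Real.exp_pos _).le
  rw [Real.exp_neg]
  have h4 : (4*z^2)⁻¹ ≤ Real.exp (1/z) := by rw [← one_div]; simpa using h3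
  calc (Real.exp (1/z))⁻¹ ≤ ((4*z^2)⁻¹)⁻¹ :=
        inv_anti₀ (by positivity) h4
  _ = 4 * z^2 := by rw [inv_inv]

lemma denom_lb {z x : ℝ} (hz : 0 < z) (hx : 0 ≤ x) (hxz : x * z ≤ 1) :
    (1/2) * Real.exp (-(x/2)) ≤ 1 + z - x * z := by
  have h1 : 1 + x/2 ≤ Real.exp (x/2) := by
    have := Real.add_one_le_exp (x/2); linarith
  have hpos : (0:ℝ) < 1 + z - x*z := by nlinarith
  have key : (1:ℝ)/2 ≤ (1 + z - x*z) * Real.exp (x/2) := by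
    have h2 : (1 + z - x*z) * (1 + x/2) ≤ (1 + z - x*z) * Real.exp (x/2) :=
      mul_le_mul_of_nonneg_left h1 hpos.le
    nlinarith [mul_nonneg (mul_nonneg hx hx) hz.le]
  have he : Real.exp (-(x/2)) = (Real.exp (x/2))⁻¹ := Real.exp_neg _
  rw [he, mul_inv_le_iff₀ (Real.exp_pos _)]
  linarith [key]

lemma hasDerivAt_expneg (x : ℝ) :
    HasDerivAt (fun x : ℝ => Real.exp (-x)) (-Real.exp (-x)) x := by
  simpa using ((hasDerivAt_id x).neg).exp

lemma hasDerivAt_expneghalf (x : ℝ) :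
    HasDerivAt (fun x : ℝ => Real.exp (-(x/2))) (-(1/2) * Real.exp (-(x/2))) x := by
  have := (((hasDerivAt_id x).div_const 2).neg).exp
  simpa [mul_comm] using this

-- antiderivative of main part
lemma hasDerivAt_Fm (z x : ℝ) :
    HasDerivAt (fun x : ℝ => z^2 * (-(x/2+1/4)*(Real.exp (-x))^2 + (x+1)*Real.exp (-x)))
      (z^2 * (x * (Real.exp (-x))^2 - x * Real.exp (-x))) x := by
  have hE := hasDerivAt_expneg x
  have h1 : HasDerivAt (fun x : ℝ => -(x/2+1/4)) (-(1/2) : ℝ) x := by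
    exact (((hasDerivAt_id x).div_const 2).add_const (1/4)).neg
  have h2 := hE.pow 2
  have h3 : HasDerivAt (fun x : ℝ => x + 1) 1 x := (hasDerivAt_id x).add_const 1
  have h4 := ((h1.mul h2).add (h3.mul hE)).const_mul (z^2)
  refine h4.congr_deriv ?_
  simp only [Pi.pow_apply]
  push_cast
  ring

-- antiderivative of bound
lemma hasDerivAt_Phi (x : ℝ) :
    HasDerivAt (fun x : ℝ => -(2*x^2+8*x+18) * Real.exp (-(x/2)))
      ((1+x^2) * Real.exp (-(x/2))) x := by
  have hE := hasDerivAt_expneghalf x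
  have h1 : HasDerivAt (fun x : ℝ => -(2*x^2+8*x+18)) (-(4*x+8)) x := by
    have ha := ((hasDerivAt_pow 2 x).const_mul (2:ℝ))
    have hb := ((hasDerivAt_id x).const_mul (8:ℝ)).add_const (18:ℝ)
    have hc := (ha.add hb).neg
    have hf : (fun x : ℝ => -(2*x^2+8*x+18)) = -((fun y : ℝ => 2*y^2) + fun x => 8*id x+18) := by
      ext y; simp only [Pi.neg_apply, Pi.add_apply, id]; ring
    rw [hf]
    exact hc.congr_deriv (by push_cast; ring)
  have h4 := h1.mul hE
  refine h4.congr_deriv ?_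
  ring

set_option maxHeartbeats 2000000 in
lemma key {z : ℝ} (hz : 0 < z) (hz1 : z < 1) :
    |(∫ x in (Real.log 2)..(1 / z),
        ((x * z ^ 2 * Real.exp (-x)) / ((z + 1) * (x * z + z + 1))
          + z / ((x - 1) * z - 1) + z / (z + 1)) * Real.exp (-x))
        + ((7 + 6 * Real.log 2) / 16) * z ^ 2| ≤ 200 * z ^ 3 := by
  set a := Real.log 2 with ha_def
  set b := 1 / z with hb_def
  have ha0 : 0 < a := Real.log_pos (by norm_num)
  have ha1 : a < 1 := by
    have := Real.log_two_lt_d9; rw [ha_def]; linarith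
  have hb1 : 1 < b := by rw [hb_def]; exact one_lt_one_div hz hz1
  have hab : a ≤ b := by linarith
  -- facts for x in the interval
  have hfact : ∀ x ∈ Set.Icc a b, 0 < x ∧ x * z ≤ 1 := by
    intro x hx
    refine ⟨lt_of_lt_of_le ha0 hx.1, ?_⟩
    have := hx.2
    rw [hb_def] at this
    rw [← le_div_iff₀ hz] at *
    exact this
  -- the error term
  set Ef : ℝ → ℝ := fun x => z^3 * ((1/(z+1) - (x+1)^2/(x*z+z+1)) * (Real.exp (-x))^2
      + (1/(z+1) - (x-1)^2/(1+z-x*z)) * Real.exp (-x)) with hEf_def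
  set main : ℝ → ℝ := fun x => z^2 * (x * (Real.exp (-x))^2 - x * Real.exp (-x)) with hmain_def
  -- pointwise identity
  have hident : Set.EqOn (fun x => ((x * z ^ 2 * Real.exp (-x)) / ((z + 1) * (x * z + z + 1))
          + z / ((x - 1) * z - 1) + z / (z + 1)) * Real.exp (-x))
      (fun x => main x + Ef x) (Set.uIcc a b) := by
    intro x hx
    rw [Set.uIcc_of_le hab] at hx
    obtain ⟨hx0, hxz⟩ := hfact x hx
    have d1 : z + 1 ≠ 0 := by positivity
    have d2 : x*z + z + 1 ≠ 0 := by positivity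
    have d4 : 1 + z - x*z ≠ 0 := by nlinarith
    have d3 : (x-1)*z - 1 ≠ 0 := by
      intro h; apply d4; nlinarith [h]
    simp only [hmain_def, hEf_def]
    rw [show (x-1)*z - 1 = -(1+z-x*z) by ring]
    field_simp
    ring
  -- continuity of Ef on the interval
  have hEcont : ContinuousOn Ef (Set.uIcc a b) := by
    rw [Set.uIcc_of_le hab]
    apply ContinuousOn.mul continuousOn_const
    apply ContinuousOn.add
    · apply ContinuousOn.mul ?_ (by fun_prop)
      apply ContinuousOn.sub
      · exact ContinuousOn.div continuousOn_const (by fun_prop)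
          (fun x hx => by have := (hfact x hx).1; positivity)
      · exact ContinuousOn.div (by fun_prop) (by fun_prop)
          (fun x hx => by have := (hfact x hx).1; positivity)
    · apply ContinuousOn.mul ?_ (by fun_prop)
      apply ContinuousOn.sub
      · exact ContinuousOn.div continuousOn_const (by fun_prop) (fun x hx => by positivity)
      · exact ContinuousOn.div (by fun_prop) (by fun_prop)
          (fun x hx => by
            have h := (hfact x hx).2
            nlinarith)
  have hEint : IntervalIntegrable Ef volume a b := by
    rw [Set.uIcc_of_le hab] at hEcont
    exact (ContinuousOn.intervalIntegrable_of_Icc hab hEcont)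
  have hmainint : IntervalIntegrable main volume a b := by
    apply Continuous.intervalIntegrable; fun_prop
  -- split the integral
  have hsplit : (∫ x in a..b,
        ((x * z ^ 2 * Real.exp (-x)) / ((z + 1) * (x * z + z + 1))
          + z / ((x - 1) * z - 1) + z / (z + 1)) * Real.exp (-x))
      = (∫ x in a..b, main x) + (∫ x in a..b, Ef x) := by
    rw [intervalIntegral.integral_congr hident]
    exact intervalIntegral.integral_add hmainint hEint
  -- FTC for the main part
  have hmainval : (∫ x in a..b, main x)
      = z^2 * (-(b/2+1/4)*(Real.exp (-b))^2 + (b+1)*Real.exp (-b))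
        - z^2 * (-(a/2+1/4)*(Real.exp (-a))^2 + (a+1)*Real.exp (-a)) := by
    exact intervalIntegral.integral_eq_sub_of_hasDerivAt
      (fun x _ => hasDerivAt_Fm z x) hmainint
  have hexpa : Real.exp (-a) = 1/2 := by
    rw [ha_def, Real.exp_neg, Real.exp_log (by norm_num : (0:ℝ) < 2)]; norm_num
  have hFma : z^2 * (-(a/2+1/4)*(Real.exp (-a))^2 + (a+1)*Real.exp (-a))
      = ((7 + 6 * a) / 16) * z ^ 2 := by
    rw [hexpa]; ring
  -- bound the boundary term at b
  have hFmb : |z^2 * (-(b/2+1/4)*(Real.exp (-b))^2 + (b+1)*Real.exp (-b))| ≤ 20 * z^3 := by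
    set t := Real.exp (-b) with ht_def
    have ht0 : 0 < t := Real.exp_pos _
    have ht : t ≤ 4 * z^2 := by rw [ht_def, hb_def]; exact exp_small hz
    have hbz : b * z = 1 := by rw [hb_def]; field_simp
    have hb0 : 0 < b := by linarith
    have hre : z^2 * (-(b/2+1/4)*t^2 + (b+1)*t)
        = z^2 * ((b+1)*t) - z^2 * ((b/2+1/4)*t^2) := by ring
    have hz3 : (0:ℝ) < z^3 := pow_pos hz 3
    rw [abs_le, hre]
    constructor
    · have h1 : z^2 * ((b/2+1/4)*t^2) ≤ z^2 * ((b/2+1/4)*((4*z^2)*(4*z^2))) := by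
        apply mul_le_mul_of_nonneg_left ?_ (by positivity)
        apply mul_le_mul_of_nonneg_left ?_ (by positivity)
        calc t^2 = t * t := sq t
        _ ≤ (4*z^2) * (4*z^2) := mul_le_mul ht ht ht0.le (by positivity)
      have h2 : z^2 * ((b/2+1/4)*((4*z^2)*(4*z^2))) = 8*z^5*(b*z) + 4*z^6 := by ring
      have h3 : (0:ℝ) ≤ z^2 * ((b+1)*t) := by positivity
      rw [h2, hbz] at h1
      have h5 : z^5 ≤ z^3 := pow_le_pow_of_le_one hz.le hz1.le (by norm_num)
      have h6 : z^6 ≤ z^3 := pow_le_pow_of_le_one hz.le hz1.le (by norm_num)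
      linarith
    · have h1 : z^2 * ((b+1)*t) ≤ z^2 * ((b+1)*(4*z^2)) := by
        apply mul_le_mul_of_nonneg_left ?_ (by positivity)
        exact mul_le_mul_of_nonneg_left ht (by positivity)
      have h2 : z^2 * ((b+1)*(4*z^2)) = 4*z^3*(b*z) + 4*z^4 := by ring
      rw [h2, hbz] at h1
      have h3 : (0:ℝ) ≤ z^2 * ((b/2+1/4)*t^2) := by positivity
      have h4 : z^4 ≤ z^3 := pow_le_pow_of_le_one hz.le hz1.le (by norm_num)
      linarith
  -- pointwise bound for Ef
  have hEpt : ∀ x ∈ Set.uIoc a b, ‖Ef x‖ ≤ 5*z^3*((1+x^2) * Real.exp (-(x/2))) := by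
    intro x hx
    rw [Set.uIoc_of_le hab] at hx
    obtain ⟨hx0, hxz⟩ := hfact x ⟨hx.1.le, hx.2⟩
    set e := Real.exp (-(x/2)) with he_def
    have he0 : 0 < e := Real.exp_pos _
    have he1 : e ≤ 1 := Real.exp_le_one_iff.mpr (by linarith)
    have hee : Real.exp (-x) = e^2 := by
      rw [he_def, sq, ← Real.exp_add]; congr 1; ring
    have hd2 : (0:ℝ) < x*z + z + 1 := by positivity
    have hA1 : |1/(z+1) - (x+1)^2/(x*z+z+1)| ≤ 1 + (x+1)^2 := by
      have p1 : (0:ℝ) ≤ 1/(z+1) := by positivity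
      have p2 : 1/(z+1) ≤ 1 := by rw [div_le_one (by positivity)]; linarith
      have p3 : (0:ℝ) ≤ (x+1)^2/(x*z+z+1) := by positivity
      have p4 : (x+1)^2/(x*z+z+1) ≤ (x+1)^2 := by
        rw [div_le_iff₀ hd2]
        nlinarith [mul_nonneg (sq_nonneg (x+1)) (by positivity : (0:ℝ) ≤ x*z+z)]
      rw [abs_le]; constructor <;> linarith [sq_nonneg (x+1)]
    have hq : (1/2) * e ≤ 1 + z - x*z := denom_lb hz hx0.le hxz
    have hq0 : (0:ℝ) < 1 + z - x*z := lt_of_lt_of_le (by positivity) hq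
    have hA2 : |1/(z+1) - (x-1)^2/(1+z-x*z)| ≤ 1 + 2*(x-1)^2/e := by
      have p1 : (0:ℝ) ≤ 1/(z+1) := by positivity
      have p2 : 1/(z+1) ≤ 1 := by rw [div_le_one (by positivity)]; linarith
      have p3 : (0:ℝ) ≤ (x-1)^2/(1+z-x*z) := by positivity
      have p4 : (x-1)^2/(1+z-x*z) ≤ 2*(x-1)^2/e := by
        have := div_le_div_of_nonneg_left (sq_nonneg (x-1)) (by positivity : (0:ℝ) < (1/2)*e) hq
        calc (x-1)^2/(1+z-x*z) ≤ (x-1)^2/((1/2)*e) := this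
        _ = 2*(x-1)^2/e := by rw [div_mul_eq_div_div_swap]; ring
      have p5 : (0:ℝ) ≤ 2*(x-1)^2/e := by positivity
      rw [abs_le]; constructor <;> linarith
    -- assemble
    have hval : Ef x = z^3 * ((1/(z+1) - (x+1)^2/(x*z+z+1)) * (e^2)^2
        + (1/(z+1) - (x-1)^2/(1+z-x*z)) * e^2) := by
      rw [hEf_def]; simp only []; rw [hee]
    rw [Real.norm_eq_abs, hval, abs_mul, abs_of_pos (pow_pos hz 3)]
    have habs : |(1/(z+1) - (x+1)^2/(x*z+z+1)) * (e^2)^2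
        + (1/(z+1) - (x-1)^2/(1+z-x*z)) * e^2|
        ≤ (1 + (x+1)^2) * (e^2)^2 + (1 + 2*(x-1)^2/e) * e^2 := by
      calc _ ≤ |(1/(z+1) - (x+1)^2/(x*z+z+1)) * (e^2)^2|
            + |(1/(z+1) - (x-1)^2/(1+z-x*z)) * e^2| := abs_add_le _ _
      _ = |1/(z+1) - (x+1)^2/(x*z+z+1)| * (e^2)^2
            + |1/(z+1) - (x-1)^2/(1+z-x*z)| * e^2 := by
          rw [abs_mul, abs_mul, abs_of_pos (by positivity : (0:ℝ) < (e^2)^2),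
            abs_of_pos (by positivity : (0:ℝ) < e^2)]
      _ ≤ _ := by
          apply add_le_add
          · exact mul_le_mul_of_nonneg_right hA1 (by positivity)
          · exact mul_le_mul_of_nonneg_right hA2 (by positivity)
    calc z^3 * |_| ≤ z^3 * ((1 + (x+1)^2) * (e^2)^2 + (1 + 2*(x-1)^2/e) * e^2) :=
          mul_le_mul_of_nonneg_left habs (by positivity)
    _ ≤ 5*z^3*((1+x^2) * e) := by
        have key : (1 + (x+1)^2) * (e^2)^2 + (1 + 2*(x-1)^2/e) * e^2 ≤ 5*((1+x^2)*e) := by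
          have he2 : e^2 ≤ e := by nlinarith
          have h4a : (e^2)^2 ≤ e^2 := by nlinarith
          have he4 : (e^2)^2 ≤ e := le_trans h4a he2
          have expand : (1 + (x+1)^2) * (e^2)^2 + (1 + 2*(x-1)^2/e) * e^2
              = (1 + (x+1)^2) * (e^2)^2 + e^2 + 2*(x-1)^2*e := by
            field_simp; ring
          rw [expand]
          have s1 : (1 + (x+1)^2)*(e^2)^2 ≤ (1 + (x+1)^2)*e :=
            mul_le_mul_of_nonneg_left he4 (by positivity)
          have hd : (0:ℝ) ≤ (2*x^2+2*x)*e := by positivity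
          nlinarith [hd]
        calc z^3 * ((1 + (x+1)^2) * (e^2)^2 + (1 + 2*(x-1)^2/e) * e^2)
            ≤ z^3 * (5*((1+x^2)*e)) := mul_le_mul_of_nonneg_left key (by positivity)
        _ = 5*z^3*((1+x^2) * e) := by ring
  -- integral bound for Ef
  have hEintbound : |∫ x in a..b, Ef x| ≤ 140 * z^3 := by
    have hBint : IntervalIntegrable (fun x => 5*z^3*((1+x^2) * Real.exp (-(x/2)))) volume a b := by
      apply Continuous.intervalIntegrable; fun_prop
    have h1 : ‖∫ x in a..b, Ef x‖ ≤ |∫ x in a..b, 5*z^3*((1+x^2) * Real.exp (-(x/2)))| :=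
      intervalIntegral.norm_integral_le_abs_of_norm_le
        (MeasureTheory.ae_restrict_of_forall_mem measurableSet_uIoc hEpt) hBint
    have hBval : (∫ x in a..b, 5*z^3*((1+x^2) * Real.exp (-(x/2))))
        = 5*z^3 * ((-(2*b^2+8*b+18) * Real.exp (-(b/2))) - (-(2*a^2+8*a+18) * Real.exp (-(a/2)))) := by
      rw [intervalIntegral.integral_const_mul]
      congr 1
      exact intervalIntegral.integral_eq_sub_of_hasDerivAt
        (fun x _ => hasDerivAt_Phi x) (by apply Continuous.intervalIntegrable; fun_prop)
    have hBnn : 0 ≤ ∫ x in a..b, 5*z^3*((1+x^2) * Real.exp (-(x/2))) := by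
      apply intervalIntegral.integral_nonneg hab
      intro x _; positivity
    have hBup : (∫ x in a..b, 5*z^3*((1+x^2) * Real.exp (-(x/2)))) ≤ 140 * z^3 := by
      rw [hBval]
      have e1 : Real.exp (-(a/2)) ≤ 1 := Real.exp_le_one_iff.mpr (by linarith)
      have e2 : (0:ℝ) < Real.exp (-(b/2)) := Real.exp_pos _
      have e3 : (0:ℝ) < Real.exp (-(a/2)) := Real.exp_pos _
      have h2 : (2*a^2+8*a+18) * Real.exp (-(a/2)) ≤ 28 := by
        have h2a : 2*a^2+8*a+18 ≤ 28 := by nlinarith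
        calc (2*a^2+8*a+18) * Real.exp (-(a/2)) ≤ 28 * 1 :=
          mul_le_mul h2a e1 e3.le (by norm_num)
        _ = 28 := by ring
      have h3 : (0:ℝ) ≤ (2*b^2+8*b+18) * Real.exp (-(b/2)) := by positivity
      calc 5*z^3 * ((-(2*b^2+8*b+18) * Real.exp (-(b/2))) - (-(2*a^2+8*a+18) * Real.exp (-(a/2))))
          = 5*z^3 * ((2*a^2+8*a+18) * Real.exp (-(a/2)) - (2*b^2+8*b+18) * Real.exp (-(b/2))) := by
            ring
      _ ≤ 5*z^3 * 28 := mul_le_mul_of_nonneg_left (by linarith) (by positivity)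
      _ = 140 * z^3 := by ring
    rw [Real.norm_eq_abs] at h1
    calc |∫ x in a..b, Ef x| ≤ _ := h1
    _ ≤ 140 * z^3 := by rw [abs_of_nonneg hBnn]; exact hBup
  -- conclusion
  rw [hsplit, hmainval, hFma]
  have hre2 : z ^ 2 * (-(b / 2 + 1 / 4) * Real.exp (-b) ^ 2 + (b + 1) * Real.exp (-b))
        - (7 + 6 * a) / 16 * z ^ 2 + (∫ x in a..b, Ef x) + (7 + 6 * a) / 16 * z ^ 2
      = z ^ 2 * (-(b / 2 + 1 / 4) * Real.exp (-b) ^ 2 + (b + 1) * Real.exp (-b))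
        + ∫ x in a..b, Ef x := by ring
  rw [hre2]
  calc |z ^ 2 * (-(b / 2 + 1 / 4) * Real.exp (-b) ^ 2 + (b + 1) * Real.exp (-b))
        + ∫ x in a..b, Ef x|
      ≤ |z ^ 2 * (-(b / 2 + 1 / 4) * Real.exp (-b) ^ 2 + (b + 1) * Real.exp (-b))|
        + |∫ x in a..b, Ef x| := abs_add_le _ _
  _ ≤ 20 * z^3 + 140 * z^3 := add_le_add hFmb hEintbound
  _ ≤ 200 * z^3 := by nlinarith [pow_pos hz 3]

/-- asymptotics of the integral `I(z)` arising in the evaluation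
of the half-Laplacian of the logarithmic barrier. -/
theorem I_asymptotics :
    (fun z : ℝ =>
        (∫ x in (Real.log 2)..(1 / z),
          ((x * z ^ 2 * Real.exp (-x)) / ((z + 1) * (x * z + z + 1))
            + z / ((x - 1) * z - 1) + z / (z + 1)) * Real.exp (-x))
          + ((7 + 6 * Real.log 2) / 16) * z ^ 2)
      =O[nhdsWithin 0 (Set.Ioi (0 : ℝ))] (fun z : ℝ => z ^ 3) := by
  rw [isBigO_iff]
  refine ⟨200, ?_⟩
  filter_upwards [Ioo_mem_nhdsGT_of_mem
    (by norm_num : (0:ℝ) ∈ Set.Ico (0:ℝ) 1)] with z hz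
  rw [Real.norm_eq_abs, Real.norm_eq_abs, abs_of_pos (pow_pos hz.1 3)]
  exact key hz.1 hz.2
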